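/- arXiv:2108.03282 — 5 statements merged into one kernel-verified Lean document; each statement's English description precedes it below -/
import Mathlib

section
/- Let B be a family of blocks in a monoid M with parameter type Θ. Let j, m, n be natural numbers with 1 ≤ j ≤ m < n. Then for every parameter assignment θ for the cascade C_{j,n} and every α ∈ Θ, there exist α' ∈ Θ and a parameter assignment θ' such that C_{j,n}(θ) * B m α = B (m+1) α' * C_{j,n}(θ'). -/
/-- The cascade `C_{i,j}(θ) = B i (θ i) * B (i+1) (θ (i+1)) * ⋯ * B j (θ j)`. -/
def cascade {M Θ : Type*} [Monoid M] (B : ℕ → Θ → M) (i j : ℕ) (θ : ℕ → Θ) : M :=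
  ((List.range (j + 1 - i)).map (fun k => B (i + k) (θ (i + k)))).prod

theorem cascade_split {M Θ : Type*} [Monoid M] (B : ℕ → Θ → M) (i k j : ℕ) (θ : ℕ → Θ)
    (h1 : i ≤ k + 1) (h2 : k ≤ j) :
    cascade B i j θ = cascade B i k θ * cascade B (k + 1) j θ := by
  unfold cascade
  have h : j + 1 - i = (k + 1 - i) + (j - k) := by omega
  rw [h, List.range_add, List.map_append, List.prod_append]
  congr 1
  rw [List.map_map]
  have h3 : j + 1 - (k + 1) = j - k := by omega
  rw [h3]
  congr 1
  apply List.map_congr_left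
  intro x _
  simp only [Function.comp]
  have h4 : i + (k + 1 - i + x) = k + 1 + x := by omega
  rw [h4]

theorem cascade_congr {M Θ : Type*} [Monoid M] (B : ℕ → Θ → M) (i j : ℕ) (θ θ' : ℕ → Θ)
    (h : ∀ t, i ≤ t → t ≤ j → θ t = θ' t) :
    cascade B i j θ = cascade B i j θ' := by
  unfold cascade
  congr 1
  apply List.map_congr_left
  intro x hx
  rw [List.mem_range] at hx
  rw [h (i + x) (by omega) (by omega)]

theorem cascade_commute {M Θ : Type*} [Monoid M] (B : ℕ → Θ → M) (i j m : ℕ) (θ : ℕ → Θ)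
    (α : Θ) (h : ∀ t β, i ≤ t → t ≤ j → B t β * B m α = B m α * B t β) :
    Commute (cascade B i j θ) (B m α) := by
  unfold cascade
  apply Commute.list_prod_left
  intro x hx
  simp only [List.mem_map, List.mem_range] at hx
  obtain ⟨k, hk, rfl⟩ := hx
  exact h (i + k) _ (by omega) (by omega)

/-- **Lemma 1 (cascade–block turnover).**  Let `B` be a family of blocks in a monoid `M`
(satisfying fusion, commutation and turnover).  For `1 ≤ j ≤ m < n`, a block `B m α` can be
passed through the cascade `C_{j,n}` from right to left, shifting its index up by one. -/
theorem cascade_block_turnover {M Θ : Type*} [Monoid M] (B : ℕ → Θ → M)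
    (hfusion : ∀ (i : ℕ) (α β : Θ), ∃ a : Θ, B i α * B i β = B i a)
    (hcomm : ∀ (i j : ℕ), 1 < Nat.dist i j → ∀ (α β : Θ),
      B i α * B j β = B j β * B i α)
    (hturnover : ∀ (i : ℕ) (α β γ : Θ), ∃ a b c : Θ,
      B i α * B (i + 1) β * B i γ = B (i + 1) a * B i b * B (i + 1) c)
    (j m n : ℕ) (hj : 1 ≤ j) (hjm : j ≤ m) (hmn : m < n) :
    ∀ (θ : ℕ → Θ) (α : Θ), ∃ (α' : Θ) (θ' : ℕ → Θ),
      cascade B j n θ * B m α = B (m + 1) α' * cascade B j n θ' := by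
  intro θ α
  obtain ⟨a, b, c, habc⟩ := hturnover m (θ m) (θ (m + 1)) α
  set θ' : ℕ → Θ := fun t => if t = m then b else if t = m + 1 then c else θ t with hθ'
  refine ⟨a, θ', ?_⟩
  -- splits
  have hs1 : cascade B j n θ = cascade B j (m + 1) θ * cascade B (m + 2) n θ :=
    cascade_split B j (m + 1) n θ (by omega) (by omega)
  have hm1 : m - 1 + 1 = m := by omega
  have hs2 : cascade B j (m + 1) θ = cascade B j (m - 1) θ * cascade B m (m + 1) θ := by
    have := cascade_split B j (m - 1) (m + 1) θ (by omega) (by omega)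
    rwa [hm1] at this
  have htwo : ∀ ψ : ℕ → Θ, cascade B m (m + 1) ψ = B m (ψ m) * B (m + 1) (ψ (m + 1)) := by
    intro ψ
    have h2 : m + 1 + 1 - m = 2 := by omega
    unfold cascade
    rw [h2]
    simp [List.range_succ, mul_assoc]
  -- commutations
  have hc1 : Commute (cascade B (m + 2) n θ) (B m α) := by
    apply cascade_commute
    intro t β ht _
    exact hcomm t m (by simp [Nat.dist]; omega) β α
  have hc2 : Commute (cascade B j (m - 1) θ) (B (m + 1) a) := by
    apply cascade_commute
    intro t β _ ht
    exact hcomm t (m + 1) (by simp [Nat.dist]; omega) β a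
  -- cascade of θ'
  have hs1' : cascade B j n θ' = cascade B j (m + 1) θ' * cascade B (m + 2) n θ' :=
    cascade_split B j (m + 1) n θ' (by omega) (by omega)
  have hs2' : cascade B j (m + 1) θ' = cascade B j (m - 1) θ' * cascade B m (m + 1) θ' := by
    have := cascade_split B j (m - 1) (m + 1) θ' (by omega) (by omega)
    rwa [hm1] at this
  have he1 : cascade B j (m - 1) θ' = cascade B j (m - 1) θ := by
    apply cascade_congr; intro t _ ht
    simp only [hθ']; rw [if_neg (by omega), if_neg (by omega)]
  have he2 : cascade B (m + 2) n θ' = cascade B (m + 2) n θ := by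
    apply cascade_congr; intro t ht _
    simp only [hθ']; rw [if_neg (by omega), if_neg (by omega)]
  have hbm : θ' m = b := by simp [hθ']
  have hcm : θ' (m + 1) = c := by simp [hθ']
  calc cascade B j n θ * B m α
      = cascade B j (m - 1) θ * (B m (θ m) * B (m + 1) (θ (m + 1)) *
        (cascade B (m + 2) n θ * B m α)) := by
        rw [hs1, hs2, htwo θ]; simp [mul_assoc]
    _ = cascade B j (m - 1) θ * (B m (θ m) * B (m + 1) (θ (m + 1)) * B m α *
        cascade B (m + 2) n θ) := by rw [hc1.eq]; simp [mul_assoc]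
    _ = cascade B j (m - 1) θ * (B (m + 1) a * (B m b * B (m + 1) c *
        cascade B (m + 2) n θ)) := by rw [habc]; simp [mul_assoc]
    _ = B (m + 1) a * (cascade B j (m - 1) θ * (B m b * B (m + 1) c *
        cascade B (m + 2) n θ)) := by rw [← mul_assoc, hc2.eq, mul_assoc]
    _ = B (m + 1) a * cascade B j n θ' := by
        rw [hs1', hs2', htwo θ', he1, he2, hbm, hcm]; simp [mul_assoc]
end

section
/- Let B be a family of blocks in a monoid M with parameter type Θ that additionally satisfies the reverse turnover property: for all i and all a, b, c ∈ Θ there exist α, β, γ ∈ Θ with (B (i+1) a) * (B i b) * (B (i+1) c) = (B i α) * (B (i+1) β) * (B i γ). Let n be odd, n ≥ 1. Then for every parameter assignment θ for the triangle T_n there exists a parameter assignment φ such that T_n(θ) equals the square S_n(φ) := (C_{n−1,n} * C_{n−3,n} * ⋯ * C_{2,n}) * (C_{1,n} * C_{1,n−2} * ⋯ * C_{1,1}), where the first group runs over even first-indices k = n−1, n−3, …, 2 in decreasing order and the second group runs over odd second-indices k = n, n−2, …, 1 in decreasing order, each cascade with its own parameters from φ. -/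
/-- The triangle `T_n(θ) = C_{n,n} * C_{n-1,n} * ⋯ * C_{1,n}`, where the `k`-th cascade
`C_{n-k,n}` carries its own parameters `θ k`. -/
def triangle {M Θ : Type*} [Monoid M] (B : ℕ → Θ → M) (n : ℕ) (θ : ℕ → ℕ → Θ) : M :=
  ((List.range n).map (fun k => cascade B (n - k) n (θ k))).prod

/-- The square of odd height `n`:
`S_n = (C_{n-1,n} * C_{n-3,n} * ⋯ * C_{2,n}) * (C_{1,n} * C_{1,n-2} * ⋯ * C_{1,1})`,
where the first group runs over the even first-indices `k = n-1, n-3, …, 2` in decreasing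
order (with parameters `φ₁ k`) and the second group runs over the odd second-indices
`k = n, n-2, …, 1` in decreasing order (with parameters `φ₂ k`). -/
def squareOdd {M Θ : Type*} [Monoid M] (B : ℕ → Θ → M) (n : ℕ)
    (φ₁ φ₂ : ℕ → ℕ → Θ) : M :=
  ((List.range ((n - 1) / 2)).map
      (fun t => cascade B (n - 1 - 2 * t) n (φ₁ (n - 1 - 2 * t)))).prod *
  ((List.range ((n + 1) / 2)).map
      (fun t => cascade B 1 (n - 2 * t) (φ₂ (n - 2 * t)))).prod

namespace TriSq

/-! ### Words and rewriting -/

/-- The word `[a, a+1, …, b]`. -/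
def wcas (a b : ℕ) : List ℕ := (List.range (b + 1 - a)).map (a + ·)

lemma wcas_nil {a b : ℕ} (h : b + 1 ≤ a) : wcas a b = [] := by
  simp [wcas, Nat.sub_eq_zero_of_le h]

lemma wcas_cons {a b : ℕ} (h : a ≤ b) : wcas a b = a :: wcas (a + 1) b := by
  have hc : b + 1 - a = (b + 1 - (a + 1)) + 1 := by omega
  rw [wcas, hc, List.range_succ_eq_map]
  simp only [List.map_cons, Nat.add_zero, List.map_map, wcas]
  congr 1
  refine List.map_congr_left ?_
  intro x _; simp only [Function.comp_apply]; omega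

lemma mem_wcas {i a b : ℕ} (h : i ∈ wcas a b) : a ≤ i ∧ i ≤ b := by
  simp only [wcas, List.mem_map, List.mem_range] at h
  obtain ⟨k, hk, rfl⟩ := h; omega

lemma wcas_map_sub {a b : ℕ} (h : 1 ≤ a) (hab : a ≤ b) :
    (wcas a b).map (fun i => i - 1) = wcas (a - 1) (b - 1) := by
  have hc : b + 1 - a = (b - 1) + 1 - (a - 1) := by omega
  simp only [wcas, List.map_map, hc]
  refine List.map_congr_left ?_
  intro k _; simp only [Function.comp_apply]; omega

/-- Symmetric rewriting relation: far commutation and braid (turnover) moves. -/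
inductive Rw : List ℕ → List ℕ → Prop
  | refl (l) : Rw l l
  | trans {a b c} : Rw a b → Rw b c → Rw a c
  | comm (u v : List ℕ) (i j : ℕ) (h : 1 < Nat.dist i j) :
      Rw (u ++ i :: j :: v) (u ++ j :: i :: v)
  | braid (u v : List ℕ) (i : ℕ) :
      Rw (u ++ i :: (i+1) :: i :: v) (u ++ (i+1) :: i :: (i+1) :: v)
  | braid' (u v : List ℕ) (i : ℕ) :
      Rw (u ++ (i+1) :: i :: (i+1) :: v) (u ++ i :: (i+1) :: i :: v)

lemma Rw.symm {l l' : List ℕ} (h : Rw l l') : Rw l' l := by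
  induction h with
  | refl => exact .refl _
  | trans _ _ ih1 ih2 => exact ih2.trans ih1
  | comm u v i j h => exact Rw.comm u v j i (by rwa [Nat.dist_comm])
  | braid u v i => exact Rw.braid' u v i
  | braid' u v i => exact Rw.braid u v i

lemma Rw.appL (w : List ℕ) {l l' : List ℕ} (h : Rw l l') : Rw (w ++ l) (w ++ l') := by
  induction h with
  | refl => exact .refl _
  | trans _ _ ih1 ih2 => exact ih1.trans ih2
  | comm u v i j hd => simpa [List.append_assoc] using Rw.comm (w ++ u) v i j hd
  | braid u v i => simpa [List.append_assoc] using Rw.braid (w ++ u) v i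
  | braid' u v i => simpa [List.append_assoc] using Rw.braid' (w ++ u) v i

lemma Rw.appR (w : List ℕ) {l l' : List ℕ} (h : Rw l l') : Rw (l ++ w) (l' ++ w) := by
  induction h with
  | refl => exact .refl _
  | trans _ _ ih1 ih2 => exact ih1.trans ih2
  | comm u v i j hd => simpa [List.append_assoc] using Rw.comm u (v ++ w) i j hd
  | braid u v i => simpa [List.append_assoc] using Rw.braid u (v ++ w) i
  | braid' u v i => simpa [List.append_assoc] using Rw.braid' u (v ++ w) i

lemma dist_big {i j : ℕ} (h : i + 2 ≤ j ∨ j + 2 ≤ i) : 1 < Nat.dist i j := by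
  simp [Nat.dist]; omega

/-- Move a letter commuting with everything in `w` from the left to the right. -/
lemma rw_cons_to_append {i : ℕ} : ∀ (w : List ℕ), (∀ j ∈ w, 1 < Nat.dist i j) →
    Rw (i :: w) (w ++ [i])
  | [], _ => .refl _
  | j :: w, h => by
      have h1 : Rw (i :: j :: w) (j :: i :: w) := by
        simpa using Rw.comm [] w i j (h j (by simp))
      have h2 : Rw (i :: w) (w ++ [i]) :=
        rw_cons_to_append w (fun x hx => h x (by simp [hx]))
      exact h1.trans (by simpa using Rw.appL [j] h2)

/-- Shift rule: `(i+1) · [a..b] ⟶ [a..b] · i` for `a ≤ i < b`. -/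
lemma rw_shift_one : ∀ (d a b i : ℕ), i = a + d → a ≤ i → i < b →
    Rw ((i + 1) :: wcas a b) (wcas a b ++ [i]) := by
  intro d
  induction d with
  | zero =>
    intro a b i hi _ hb
    have hia : a = i := by omega
    subst hia
    rw [wcas_cons (by omega : a ≤ b), wcas_cons (by omega : a + 1 ≤ b)]
    have h1 : Rw ((a+1) :: a :: (a+1) :: wcas (a+2) b)
        (a :: (a+1) :: a :: wcas (a+2) b) := by
      simpa using Rw.braid' [] (wcas (a + 2) b) a
    have h2 : Rw (a :: wcas (a+2) b) (wcas (a+2) b ++ [a]) := by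
      refine rw_cons_to_append _ (fun j hj => dist_big (Or.inl ?_))
      exact (mem_wcas hj).1
    exact h1.trans (by simpa using Rw.appL [a, a+1] h2)
  | succ d ih =>
    intro a b i hi _ hb
    have ha : a < i := by omega
    rw [wcas_cons (by omega : a ≤ b)]
    have h1 : Rw ((i+1) :: a :: wcas (a+1) b) (a :: (i+1) :: wcas (a+1) b) := by
      simpa using Rw.comm [] (wcas (a+1) b) (i+1) a (dist_big (Or.inr (by omega)))
    have h2 := ih (a+1) b i (by omega) (by omega) hb
    exact h1.trans (by simpa using Rw.appL [a] h2)

/-- Shift a whole word (with letters in `[a+1, b]`) from the left of `[a..b]`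
to the right, decreasing every letter by one. -/
lemma rw_shift_word : ∀ (w : List ℕ) (a b : ℕ), (∀ i ∈ w, a + 1 ≤ i ∧ i ≤ b) →
    Rw (w ++ wcas a b) (wcas a b ++ w.map (fun i => i - 1))
  | [], a, b, _ => by simpa using Rw.refl (wcas a b)
  | i :: w, a, b, h => by
      have hi := h i (by simp)
      have h1 : Rw (i :: (w ++ wcas a b)) (i :: (wcas a b ++ w.map (fun i => i - 1))) := by
        simpa using Rw.appL [i] (rw_shift_word w a b (fun x hx => h x (by simp [hx])))
      have h2 : Rw ((i - 1 + 1) :: wcas a b) (wcas a b ++ [i - 1]) :=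
        rw_shift_one (i - 1 - a) a b (i - 1) (by omega) (by omega) (by omega)
      have h2' := Rw.appR (w.map (fun i => i - 1)) h2
      have hii : i - 1 + 1 = i := by omega
      rw [hii] at h2'
      show Rw (i :: (w ++ wcas a b)) (wcas a b ++ (i - 1) :: w.map (fun i => i - 1))
      exact h1.trans (by simpa [List.append_assoc] using h2')

/-! ### Semantics: shapes of monoid elements -/

variable {M Θ : Type*} [Monoid M]

/-- `Shape B w x` : `x` is a product of blocks whose indices spell the word `w`. -/
def Shape (B : ℕ → Θ → M) : List ℕ → M → Prop
  | [], x => x = 1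
  | i :: l, x => ∃ (α : Θ) (y : M), Shape B l y ∧ x = B i α * y

lemma shape_append (B : ℕ → Θ → M) :
    ∀ (u v : List ℕ) (x : M), Shape B (u ++ v) x ↔
      ∃ y z, Shape B u y ∧ Shape B v z ∧ x = y * z := by
  intro u
  induction u with
  | nil =>
    intro v x
    simp only [List.nil_append, Shape]
    constructor
    · intro h; exact ⟨1, x, rfl, h, (one_mul x).symm⟩
    · rintro ⟨y, z, rfl, hz, rfl⟩; simpa
  | cons i u ih =>
    intro v x
    simp only [List.cons_append, Shape]
    constructor
    · rintro ⟨α, y, hy, rfl⟩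
      obtain ⟨y1, z, h1, h2, rfl⟩ := (ih v y).mp hy
      exact ⟨B i α * y1, z, ⟨α, y1, h1, rfl⟩, h2, by simp [mul_assoc]⟩
    · rintro ⟨y, z, ⟨α, y1, h1, rfl⟩, hz, rfl⟩
      exact ⟨α, y1 * z, (ih v _).mpr ⟨y1, z, h1, hz, rfl⟩, by simp [mul_assoc]⟩

lemma shape_prod (B : ℕ → Θ → M) (p : ℕ → Θ) :
    ∀ w : List ℕ, Shape B w ((w.map (fun i => B i (p i))).prod)
  | [] => rfl
  | i :: w => ⟨p i, _, shape_prod B p w, by simp⟩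

/-- Rewriting preserves shapes (using commutation and both turnovers). -/
lemma shape_rw (B : ℕ → Θ → M)
    (hcomm : ∀ (i j : ℕ), 1 < Nat.dist i j → ∀ (α β : Θ),
      B i α * B j β = B j β * B i α)
    (hturnover : ∀ (i : ℕ) (α β γ : Θ), ∃ a b c : Θ,
      B i α * B (i + 1) β * B i γ = B (i + 1) a * B i b * B (i + 1) c)
    (hrevturnover : ∀ (i : ℕ) (a b c : Θ), ∃ α β γ : Θ,
      B (i + 1) a * B i b * B (i + 1) c = B i α * B (i + 1) β * B i γ)
    {l l' : List ℕ} (h : Rw l l') : ∀ x : M, Shape B l x → Shape B l' x := by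
  induction h with
  | refl => exact fun x h => h
  | trans _ _ ih1 ih2 => exact fun x h => ih2 x (ih1 x h)
  | comm u v i j hd =>
    intro x hx
    rw [shape_append] at hx ⊢
    obtain ⟨y, z, hy, hz, rfl⟩ := hx
    obtain ⟨α, z1, ⟨β, z2, hz2, rfl⟩, rfl⟩ := hz
    refine ⟨y, B j β * (B i α * z2), hy, ⟨β, _, ⟨α, z2, hz2, rfl⟩, rfl⟩, ?_⟩
    rw [← mul_assoc (B i α), hcomm i j hd, mul_assoc]
  | braid u v i =>
    intro x hx
    rw [shape_append] at hx ⊢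
    obtain ⟨y, z, hy, hz, rfl⟩ := hx
    obtain ⟨α, z1, ⟨β, z2, ⟨γ, z3, hz3, rfl⟩, rfl⟩, rfl⟩ := hz
    obtain ⟨a, b, c, habc⟩ := hturnover i α β γ
    refine ⟨y, B (i+1) a * (B i b * (B (i+1) c * z3)), hy,
      ⟨a, _, ⟨b, _, ⟨c, z3, hz3, rfl⟩, rfl⟩, rfl⟩, ?_⟩
    simpa [mul_assoc] using congrArg (fun m => y * (m * z3)) habc
  | braid' u v i =>
    intro x hx
    rw [shape_append] at hx ⊢
    obtain ⟨y, z, hy, hz, rfl⟩ := hx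
    obtain ⟨a, z1, ⟨b, z2, ⟨c, z3, hz3, rfl⟩, rfl⟩, rfl⟩ := hz
    obtain ⟨α, β, γ, habc⟩ := hrevturnover i a b c
    refine ⟨y, B i α * (B (i+1) β * (B i γ * z3)), hy,
      ⟨α, _, ⟨β, _, ⟨γ, z3, hz3, rfl⟩, rfl⟩, rfl⟩, ?_⟩
    simpa [mul_assoc] using congrArg (fun m => y * (m * z3)) habc

/-! ### Cascades and shapes -/

lemma cascade_eq_prod (B : ℕ → Θ → M) (a b : ℕ) (θ : ℕ → Θ) :
    cascade B a b θ = ((wcas a b).map (fun i => B i (θ i))).prod := by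
  simp only [cascade, wcas, List.map_map]
  rfl

lemma shape_cascade (B : ℕ → Θ → M) (a b : ℕ) (θ : ℕ → Θ) :
    Shape B (wcas a b) (cascade B a b θ) := by
  rw [cascade_eq_prod]; exact shape_prod B θ _

lemma cascade_cons (B : ℕ → Θ → M) {a b : ℕ} (h : a ≤ b) (θ : ℕ → Θ) :
    cascade B a b θ = B a (θ a) * cascade B (a + 1) b θ := by
  rw [cascade_eq_prod, cascade_eq_prod, wcas_cons h, List.map_cons, List.prod_cons]

lemma cascade_congr (B : ℕ → Θ → M) {a b : ℕ} {θ θ' : ℕ → Θ}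
    (h : ∀ k, a ≤ k → k ≤ b → θ k = θ' k) :
    cascade B a b θ = cascade B a b θ' := by
  rw [cascade, cascade]
  congr 1
  refine List.map_congr_left ?_
  intro k hk
  rw [List.mem_range] at hk
  rw [h (a + k) (by omega) (by omega)]

lemma shape_wcas_extract (B : ℕ → Θ → M) [Inhabited Θ] :
    ∀ (d a b : ℕ), b + 1 - a = d → ∀ y : M, Shape B (wcas a b) y →
      ∃ θ : ℕ → Θ, y = cascade B a b θ := by
  intro d
  induction d with
  | zero =>
    intro a b hd y hy
    rw [wcas_nil (by omega)] at hy
    exact ⟨fun _ => default, hy.trans (by simp [cascade, Nat.sub_eq_zero_of_le (by omega : b + 1 ≤ a)])⟩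
  | succ d ih =>
    intro a b hd y hy
    have hab : a ≤ b := by omega
    rw [wcas_cons hab] at hy
    obtain ⟨α, y', hy', rfl⟩ := hy
    obtain ⟨θ', rfl⟩ := ih (a + 1) b (by omega) y' hy'
    refine ⟨Function.update θ' a α, ?_⟩
    rw [cascade_cons B hab, Function.update_self,
      cascade_congr B (θ := Function.update θ' a α) (θ' := θ')
        (fun k hk1 _ => Function.update_of_ne (by omega) _ _)]

/-! ### Flattened families of cascades -/

lemma shape_flat (B : ℕ → Θ → M) (wf : ℕ → List ℕ) (xf : ℕ → M) :
    ∀ m : ℕ, (∀ k, k < m → Shape B (wf k) (xf k)) →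
      Shape B (((List.range m).map wf).flatten) (((List.range m).map xf).prod) := by
  intro m
  induction m with
  | zero => intro _; simp [Shape]
  | succ m ih =>
    intro h
    rw [List.range_succ]
    simp only [List.map_append, List.flatten_append, List.map_cons, List.map_nil,
      List.prod_append, List.flatten_cons, List.flatten_nil, List.append_nil,
      List.prod_cons, List.prod_nil, mul_one]
    rw [shape_append]
    exact ⟨_, _, ih (fun k hk => h k (by omega)), h m (by omega), rfl⟩

lemma shape_flat_extract (B : ℕ → Θ → M) (wf : ℕ → List ℕ) :
    ∀ m : ℕ, ∀ x : M, Shape B (((List.range m).map wf).flatten) x →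
      ∃ xs : ℕ → M, x = ((List.range m).map xs).prod ∧ ∀ k, k < m → Shape B (wf k) (xs k) := by
  intro m
  induction m with
  | zero =>
    intro x hx
    refine ⟨fun _ => 1, ?_, fun k hk => absurd hk (by omega)⟩
    simpa [Shape] using hx
  | succ m ih =>
    intro x hx
    rw [List.range_succ] at hx
    simp only [List.map_append, List.flatten_append, List.map_cons, List.map_nil,
      List.flatten_cons, List.flatten_nil, List.append_nil] at hx
    rw [shape_append] at hx
    obtain ⟨y, z, hy, hz, rfl⟩ := hx
    obtain ⟨xs, rfl, hxs⟩ := ih y hy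
    refine ⟨fun k => if k = m then z else xs k, ?_, ?_⟩
    · rw [List.range_succ]
      simp only [List.map_append, List.prod_append, List.map_cons, List.map_nil,
        List.prod_cons, List.prod_nil, mul_one, if_pos rfl]
      congr 1
      congr 1
      refine List.map_congr_left ?_
      intro k hk
      rw [List.mem_range] at hk
      rw [if_neg (by omega)]
    · intro k hk
      by_cases hkm : k = m
      · subst hkm; simpa using hz
      · simpa [hkm] using hxs k (by omega)

/-! ### The triangle, square and staircase words -/

/-- Word of the triangle `T_n`. -/
def Tw (n : ℕ) : List ℕ := ((List.range n).map (fun k => wcas (n - k) n)).flatten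

/-- Word of the staircase normal form `Δ_n = R_n R_{n-1} ⋯ R_1`. -/
def Dw : ℕ → List ℕ
  | 0 => []
  | n + 1 => wcas 1 (n + 1) ++ Dw n

/-- First part of the square word. -/
def P1 (n : ℕ) : List ℕ := ((List.range ((n - 1) / 2)).map (fun t => wcas (n - 1 - 2 * t) n)).flatten
/-- Second part of the square word. -/
def P2 (n : ℕ) : List ℕ := ((List.range ((n + 1) / 2)).map (fun t => wcas 1 (n - 2 * t))).flatten
/-- Word of the square `S_n` (n odd). -/
def Sw (n : ℕ) : List ℕ := P1 n ++ P2 n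

/-- First part of the intermediate word. -/
def Q1 (m : ℕ) : List ℕ := ((List.range (m / 2)).map (fun t => wcas (m - 1 - 2 * t) m)).flatten
/-- Second part of the intermediate word. -/
def Q2 (m : ℕ) : List ℕ := ((List.range (m / 2)).map (fun t => wcas 1 (m - 1 - 2 * t))).flatten
/-- Intermediate word `U_m` (m even). -/
def Uw (m : ℕ) : List ℕ := Q1 m ++ Q2 m

lemma rw_Tw : ∀ n : ℕ, Rw (Tw n) (Dw n) := by
  intro n
  induction n with
  | zero =>
    have : Tw 0 = [] := by simp [Tw]
    rw [this]; exact .refl _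
  | succ n ih =>
    set W : List ℕ := ((List.range n).map (fun k => wcas (n + 1 - k) (n + 1))).flatten with hW
    have hsplit : Tw (n + 1) = W ++ wcas 1 (n + 1) := by
      rw [Tw, List.range_succ]
      simp only [List.map_append, List.flatten_append, List.map_cons, List.map_nil,
        List.flatten_cons, List.flatten_nil, List.append_nil]
      congr 2
      omega
    have hmem : ∀ i ∈ W, 1 + 1 ≤ i ∧ i ≤ n + 1 := by
      intro i hi
      rw [hW, List.mem_flatten] at hi
      obtain ⟨l, hl, hil⟩ := hi
      rw [List.mem_map] at hl
      obtain ⟨k, hk, rfl⟩ := hl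
      rw [List.mem_range] at hk
      have := mem_wcas hil
      omega
    have hWdown : W.map (fun i => i - 1) = Tw n := by
      rw [hW, Tw, List.map_flatten, List.map_map]
      congr 1
      refine List.map_congr_left ?_
      intro k hk
      rw [List.mem_range] at hk
      simp only [Function.comp_apply]
      rw [wcas_map_sub (by omega) (by omega)]
      congr 1 <;> omega
    rw [hsplit]
    refine (rw_shift_word W 1 (n + 1) hmem).trans ?_
    rw [hWdown]
    exact Rw.appL _ ih

lemma rw_Sw_Uw : ∀ n : ℕ, (Odd n → Rw (Sw n) (Dw n)) ∧ (Even n → Rw (Uw n) (Dw n)) := by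
  intro n
  induction n using Nat.strong_induction_on with
  | _ n ih =>
  constructor
  · -- odd case
    rintro ⟨s, rfl⟩
    -- n = 2s + 1
    have hP2 : P2 (2 * s + 1) = wcas 1 (2 * s + 1) ++ Q2 (2 * s) := by
      rw [P2, show (2 * s + 1 + 1) / 2 = s + 1 by omega, List.range_succ_eq_map]
      simp only [List.map_cons, List.map_map, List.flatten_cons, Nat.mul_zero, Nat.sub_zero]
      rw [Q2, show 2 * s / 2 = s by omega]
      congr 1
      congr 1
      refine List.map_congr_left ?_
      intro t _
      simp only [Function.comp_apply]
      congr 1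
      omega
    have hmem : ∀ i ∈ P1 (2 * s + 1), 1 + 1 ≤ i ∧ i ≤ 2 * s + 1 := by
      intro i hi
      rw [P1, List.mem_flatten] at hi
      obtain ⟨l, hl, hil⟩ := hi
      rw [List.mem_map] at hl
      obtain ⟨t, ht, rfl⟩ := hl
      rw [List.mem_range] at ht
      have := mem_wcas hil
      omega
    have hdown : (P1 (2 * s + 1)).map (fun i => i - 1) = Q1 (2 * s) := by
      rw [P1, Q1, List.map_flatten, List.map_map]
      congr 1
      rw [show (2 * s + 1 - 1) / 2 = 2 * s / 2 by omega]
      refine List.map_congr_left ?_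
      intro t ht
      rw [List.mem_range] at ht
      simp only [Function.comp_apply]
      rw [wcas_map_sub (by omega) (by omega)]
      congr 1 <;> omega
    have hshift := Rw.appR (Q2 (2 * s)) (rw_shift_word (P1 (2 * s + 1)) 1 (2 * s + 1) hmem)
    rw [hdown] at hshift
    have step1 : Rw (Sw (2 * s + 1)) (wcas 1 (2 * s + 1) ++ Uw (2 * s)) := by
      rw [Sw, hP2, Uw]
      simpa [List.append_assoc] using hshift
    have step2 := (ih (2 * s) (by omega)).2 ⟨s, by omega⟩
    have hD : Dw (2 * s + 1) = wcas 1 (2 * s + 1) ++ Dw (2 * s) := rfl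
    rw [hD]
    exact step1.trans (Rw.appL _ step2)
  · -- even case
    rintro ⟨s, rfl⟩
    -- n = s + s; split on s = 0
    rcases Nat.eq_zero_or_pos s with rfl | hs
    · have h1 : Uw 0 = [] := by simp [Uw, Q1, Q2]
      have h2 : Dw 0 = [] := rfl
      rw [show (0 : ℕ) + 0 = 0 from rfl, h1, h2]; exact .refl _
    · have hn : s + s = 2 * (s - 1) + 2 := by omega
      rw [hn]
      set m := 2 * (s - 1) + 2 with hm
      have hQ1 : Q1 m = ((List.range (s - 1)).map (fun t => wcas (m - 1 - 2 * t) m)).flatten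
          ++ wcas 1 m := by
        rw [Q1, show m / 2 = (s - 1) + 1 by omega, List.range_succ]
        simp only [List.map_append, List.flatten_append, List.map_cons, List.map_nil,
          List.flatten_cons, List.flatten_nil, List.append_nil]
        congr 2
        omega
      set W : List ℕ := ((List.range (s - 1)).map (fun t => wcas (m - 1 - 2 * t) m)).flatten with hWdef
      have hmem : ∀ i ∈ W, 1 + 1 ≤ i ∧ i ≤ m := by
        intro i hi
        rw [hWdef, List.mem_flatten] at hi
        obtain ⟨l, hl, hil⟩ := hi
        rw [List.mem_map] at hl
        obtain ⟨t, ht, rfl⟩ := hl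
        rw [List.mem_range] at ht
        have := mem_wcas hil
        omega
      have hdown : W.map (fun i => i - 1) = P1 (m - 1) := by
        rw [hWdef, P1, List.map_flatten, List.map_map]
        congr 1
        rw [show (m - 1 - 1) / 2 = s - 1 by omega]
        refine List.map_congr_left ?_
        intro t ht
        rw [List.mem_range] at ht
        simp only [Function.comp_apply]
        rw [wcas_map_sub (by omega) (by omega)]
        congr 1 <;> omega
      have hQ2 : Q2 m = P2 (m - 1) := by
        rw [Q2, P2, show (m - 1 + 1) / 2 = m / 2 by omega]
      have hshift := Rw.appR (Q2 m) (rw_shift_word W 1 m hmem)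
      rw [hdown] at hshift
      have step1 : Rw (Uw m) (wcas 1 m ++ Sw (m - 1)) := by
        rw [Uw, hQ1, Sw, hQ2]
        simpa [List.append_assoc, hQ2] using hshift
      have step2 := (ih (m - 1) (by omega)).1 ⟨s - 1, by omega⟩
      have hD : Dw m = wcas 1 m ++ Dw (m - 1) := rfl
      rw [hD]
      exact step1.trans (Rw.appL _ step2)

end TriSq

open TriSq

/-- **Theorem (triangle to square, odd height).**  Let `B` be a family of blocks in a monoid
`M` (satisfying fusion, commutation and turnover) that additionally satisfies the reverse
turnover property, and let `n ≥ 1` be odd.  Then every triangle of height `n` equals a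
square of height `n` (for a suitable choice of parameters). -/
theorem triangle_eq_square_odd {M Θ : Type*} [Monoid M] (B : ℕ → Θ → M)
    (hfusion : ∀ (i : ℕ) (α β : Θ), ∃ a : Θ, B i α * B i β = B i a)
    (hcomm : ∀ (i j : ℕ), 1 < Nat.dist i j → ∀ (α β : Θ),
      B i α * B j β = B j β * B i α)
    (hturnover : ∀ (i : ℕ) (α β γ : Θ), ∃ a b c : Θ,
      B i α * B (i + 1) β * B i γ = B (i + 1) a * B i b * B (i + 1) c)
    (hrevturnover : ∀ (i : ℕ) (a b c : Θ), ∃ α β γ : Θ,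
      B (i + 1) a * B i b * B (i + 1) c = B i α * B (i + 1) β * B i γ)
    (n : ℕ) (hn : 1 ≤ n) (hodd : Odd n) :
    ∀ θ : ℕ → ℕ → Θ, ∃ φ₁ φ₂ : ℕ → ℕ → Θ,
      triangle B n θ = squareOdd B n φ₁ φ₂ := by
  intro θ
  haveI : Inhabited Θ := ⟨θ 0 0⟩
  classical
  obtain ⟨s, hns⟩ := hodd
  have htri : Shape B (Tw n) (triangle B n θ) := by
    rw [triangle]
    exact shape_flat B (fun k => wcas (n - k) n) (fun k => cascade B (n - k) n (θ k)) n
      (fun k _ => shape_cascade B _ _ _)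
  have hrw : Rw (Tw n) (Sw n) := (rw_Tw n).trans ((rw_Sw_Uw n).1 ⟨s, hns⟩).symm
  have hsq : Shape B (Sw n) (triangle B n θ) :=
    shape_rw B hcomm hturnover hrevturnover hrw _ htri
  rw [Sw, shape_append] at hsq
  obtain ⟨y, z, hy, hz, heq⟩ := hsq
  have hy' : Shape B (((List.range ((n - 1) / 2)).map
      (fun t => wcas (n - 1 - 2 * t) n)).flatten) y := hy
  have hz' : Shape B (((List.range ((n + 1) / 2)).map
      (fun t => wcas 1 (n - 2 * t))).flatten) z := hz
  obtain ⟨ys, rfl, hys⟩ := shape_flat_extract B _ _ y hy'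
  obtain ⟨zs, rfl, hzs⟩ := shape_flat_extract B _ _ z hz'
  have hex1 : ∀ t, ∃ ϑ : ℕ → Θ, t < (n - 1) / 2 → ys t = cascade B (n - 1 - 2 * t) n ϑ := by
    intro t
    by_cases ht : t < (n - 1) / 2
    · obtain ⟨ϑ, hϑ⟩ := shape_wcas_extract B (n + 1 - (n - 1 - 2 * t)) (n - 1 - 2 * t) n rfl
        (ys t) (hys t ht)
      exact ⟨ϑ, fun _ => hϑ⟩
    · exact ⟨default, fun h => absurd h ht⟩
  have hex2 : ∀ t, ∃ ϑ : ℕ → Θ, t < (n + 1) / 2 → zs t = cascade B 1 (n - 2 * t) ϑ := by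
    intro t
    by_cases ht : t < (n + 1) / 2
    · obtain ⟨ϑ, hϑ⟩ := shape_wcas_extract B (n - 2 * t + 1 - 1) 1 (n - 2 * t) rfl
        (zs t) (hzs t ht)
      exact ⟨ϑ, fun _ => hϑ⟩
    · exact ⟨default, fun h => absurd h ht⟩
  choose g1 hg1 using hex1
  choose g2 hg2 using hex2
  refine ⟨fun k => g1 ((n - 1 - k) / 2), fun k => g2 ((n - k) / 2), ?_⟩
  rw [heq, squareOdd]
  congr 1
  · congr 1
    refine List.map_congr_left ?_
    intro t ht
    rw [List.mem_range] at ht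
    rw [show (n - 1 - (n - 1 - 2 * t)) / 2 = t by omega, ← hg1 t ht]
  · congr 1
    refine List.map_congr_left ?_
    intro t ht
    rw [List.mem_range] at ht
    rw [show (n - (n - 2 * t)) / 2 = t by omega, ← hg2 t ht]
end

section
/- For all real numbers a, b, c there exist real numbers α, β, γ such that, as 8×8 complex matrices, exp(−i·a·(X ⊗ X ⊗ I)) · exp(−i·b·(I ⊗ Y ⊗ Y)) · exp(−i·c·(X ⊗ X ⊗ I)) = exp(−i·α·(I ⊗ Y ⊗ Y)) · exp(−i·β·(X ⊗ X ⊗ I)) · exp(−i·γ·(I ⊗ Y ⊗ Y)), where exp denotes the matrix exponential. This is the turnover property for the blocks of the 1D Kitaev chain. -/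
open Matrix
open scoped Kronecker

noncomputable section

/-- The Pauli matrix `X`. -/
def PauliX : Matrix (Fin 2) (Fin 2) ℂ := !![0, 1; 1, 0]

/-- The Pauli matrix `Y`. -/
def PauliY : Matrix (Fin 2) (Fin 2) ℂ := !![0, -Complex.I; Complex.I, 0]

/-- The 2×2 identity matrix. -/
def I2 : Matrix (Fin 2) (Fin 2) ℂ := 1

/-- `expm A` is the matrix exponential of an 8×8 complex matrix. -/
def expm (A : Matrix ((Fin 2 × Fin 2) × Fin 2) ((Fin 2 × Fin 2) × Fin 2) ℂ) :
    Matrix ((Fin 2 × Fin 2) × Fin 2) ((Fin 2 × Fin 2) × Fin 2) ℂ :=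
  NormedSpace.exp A

/-! ### Auxiliary material -/

attribute [local instance] Matrix.linftyOpNormedAddCommGroup Matrix.linftyOpNormedRing
  Matrix.linftyOpNormedAlgebra

abbrev Mat8 := Matrix ((Fin 2 × Fin 2) × Fin 2) ((Fin 2 × Fin 2) × Fin 2) ℂ

lemma pow_invol (M : Mat8) (h : M * M = 1) (n : ℕ) :
    M ^ n = ((2:ℂ))⁻¹ • (1 + M) + ((-1:ℂ)) ^ n • ((2:ℂ))⁻¹ • (1 - M) := by
  induction n with
  | zero => simp; module
  | succ n ih =>
    rw [pow_succ, ih, add_mul, smul_mul_assoc, smul_mul_assoc, smul_mul_assoc,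
      add_mul, one_mul, sub_mul, one_mul, h, pow_succ]
    module

lemma exp_invol (M : Mat8) (h : M * M = 1) (z : ℂ) :
    NormedSpace.exp (z • M) =
      (((Complex.exp z + Complex.exp (-z)) / 2) • (1 : Mat8)
        + ((Complex.exp z - Complex.exp (-z)) / 2) • M) := by
  have hsum : ∀ w : ℂ, Summable fun n : ℕ => ((n.factorial : ℂ))⁻¹ * w ^ n := by
    intro w
    simpa [smul_eq_mul] using NormedSpace.expSeries_summable' (𝕂 := ℂ) w
  have hexp : ∀ w : ℂ, (∑' n : ℕ, ((n.factorial : ℂ))⁻¹ * w ^ n) = Complex.exp w := by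
    intro w
    rw [Complex.exp_eq_exp_ℂ, NormedSpace.exp_eq_tsum ℂ]
    simp [smul_eq_mul]
  rw [NormedSpace.exp_eq_tsum ℂ]
  beta_reduce
  have hterm : ∀ n : ℕ, ((n.factorial : ℂ))⁻¹ • (z • M) ^ n
      = (((n.factorial : ℂ))⁻¹ * z ^ n) • (((2:ℂ))⁻¹ • (1 + M))
        + (((n.factorial : ℂ))⁻¹ * (-z) ^ n) • (((2:ℂ))⁻¹ • (1 - M)) := by
    intro n
    rw [smul_pow, pow_invol M h n, neg_pow z n]
    module
  rw [tsum_congr hterm, Summable.tsum_add ((hsum z).smul_const _) ((hsum (-z)).smul_const _),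
    Summable.tsum_smul_const (hsum z), Summable.tsum_smul_const (hsum (-z)), hexp, hexp]
  module

lemma exp_invol_real (M : Mat8) (h : M * M = 1) (t : ℝ) :
    expm ((-Complex.I * (t : ℂ)) • M)
      = ((Real.cos t : ℂ)) • (1 : Mat8) + (-Complex.I * (Real.sin t : ℂ)) • M := by
  have h1 : Complex.exp (-Complex.I * (t : ℂ))
      = (Real.cos t : ℂ) - (Real.sin t : ℂ) * Complex.I := by
    rw [show -Complex.I * (t : ℂ) = ((-t : ℝ) : ℂ) * Complex.I by push_cast; ring,
      Complex.exp_mul_I, ← Complex.ofReal_cos, ← Complex.ofReal_sin,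
      Real.cos_neg, Real.sin_neg]
    push_cast; ring
  have h2 : Complex.exp (-(-Complex.I * (t : ℂ)))
      = (Real.cos t : ℂ) + (Real.sin t : ℂ) * Complex.I := by
    rw [show -(-Complex.I * (t : ℂ)) = ((t : ℝ) : ℂ) * Complex.I by ring,
      Complex.exp_mul_I, ← Complex.ofReal_cos, ← Complex.ofReal_sin]
  rw [expm, exp_invol M h, h1, h2]
  module

lemma expand3 {R : Type*} [Ring R] [Algebra ℂ R] (A B : R)
    (hA : A * A = 1) (hAB : A * B = -(B * A)) (p1 q1 p2 q2 p3 q3 : ℂ) :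
    (p1 • (1:R) + q1 • A) * (p2 • (1:R) + q2 • B) * (p3 • (1:R) + q3 • A)
    = (p1*p2*p3 + q1*p2*q3) • (1:R) + (p1*p2*q3 + q1*p2*p3) • A
      + (p1*q2*p3 - q1*q2*q3) • B + (q1*q2*p3 - p1*q2*q3) • (A*B) := by
  have hBA : B * A = -(A * B) := by rw [hAB, neg_neg]
  have hABA : A * B * A = -B := by
    rw [hAB, neg_mul, mul_assoc, hA, mul_one]
  simp only [mul_add, add_mul, smul_mul_assoc, mul_smul_comm, one_mul, mul_one,
    hA, hBA, hABA]
  module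

lemma hXX : PauliX * PauliX = 1 := by
  simp [PauliX, Matrix.mul_fin_two, Matrix.one_fin_two]

lemma hYY : PauliY * PauliY = 1 := by
  simp [PauliY, Matrix.mul_fin_two, Matrix.one_fin_two, Complex.I_mul_I]

lemma hXY : PauliX * PauliY = -(PauliY * PauliX) := by
  simp [PauliX, PauliY, Matrix.mul_fin_two]

lemma hA8 : (PauliX ⊗ₖ PauliX ⊗ₖ I2 : Mat8) * (PauliX ⊗ₖ PauliX ⊗ₖ I2) = 1 := by
  rw [show (PauliX ⊗ₖ PauliX ⊗ₖ I2 : Mat8) * (PauliX ⊗ₖ PauliX ⊗ₖ I2)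
      = ((PauliX * PauliX) ⊗ₖ (PauliX * PauliX)) ⊗ₖ (I2 * I2) by
    rw [Matrix.mul_kronecker_mul, Matrix.mul_kronecker_mul], hXX]
  show ((1 : Matrix (Fin 2) (Fin 2) ℂ) ⊗ₖ (1 : Matrix (Fin 2) (Fin 2) ℂ))
      ⊗ₖ ((1 : Matrix (Fin 2) (Fin 2) ℂ) * 1) = 1
  rw [mul_one, Matrix.one_kronecker_one, Matrix.one_kronecker_one]

lemma hB8 : (I2 ⊗ₖ PauliY ⊗ₖ PauliY : Mat8) * (I2 ⊗ₖ PauliY ⊗ₖ PauliY) = 1 := by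
  rw [show (I2 ⊗ₖ PauliY ⊗ₖ PauliY : Mat8) * (I2 ⊗ₖ PauliY ⊗ₖ PauliY)
      = ((I2 * I2) ⊗ₖ (PauliY * PauliY)) ⊗ₖ (PauliY * PauliY) by
    rw [Matrix.mul_kronecker_mul, Matrix.mul_kronecker_mul], hYY]
  show (((1 : Matrix (Fin 2) (Fin 2) ℂ) * 1) ⊗ₖ (1 : Matrix (Fin 2) (Fin 2) ℂ))
      ⊗ₖ (1 : Matrix (Fin 2) (Fin 2) ℂ) = 1
  rw [mul_one, Matrix.one_kronecker_one, Matrix.one_kronecker_one]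

lemma hAB8 : (PauliX ⊗ₖ PauliX ⊗ₖ I2 : Mat8) * (I2 ⊗ₖ PauliY ⊗ₖ PauliY)
    = -((I2 ⊗ₖ PauliY ⊗ₖ PauliY : Mat8) * (PauliX ⊗ₖ PauliX ⊗ₖ I2)) := by
  rw [show (PauliX ⊗ₖ PauliX ⊗ₖ I2 : Mat8) * (I2 ⊗ₖ PauliY ⊗ₖ PauliY)
      = ((PauliX * I2) ⊗ₖ (PauliX * PauliY)) ⊗ₖ (I2 * PauliY) by
    rw [Matrix.mul_kronecker_mul, Matrix.mul_kronecker_mul]]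
  rw [show (I2 ⊗ₖ PauliY ⊗ₖ PauliY : Mat8) * (PauliX ⊗ₖ PauliX ⊗ₖ I2)
      = ((I2 * PauliX) ⊗ₖ (PauliY * PauliX)) ⊗ₖ (PauliY * I2) by
    rw [Matrix.mul_kronecker_mul, Matrix.mul_kronecker_mul]]
  rw [hXY, I2, mul_one, one_mul, mul_one, one_mul,
    show -(PauliY*PauliX) = (-1:ℂ) • (PauliY*PauliX) from (neg_one_smul ℂ _).symm,
    Matrix.kronecker_smul, Matrix.smul_kronecker, neg_one_smul]

lemma circle_exists (x y r : ℝ) (hr : 0 ≤ r) (h : x^2 + y^2 = r^2) :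
    ∃ θ : ℝ, r * Real.cos θ = x ∧ r * Real.sin θ = y := by
  rcases eq_or_lt_of_le hr with hr0 | hr0
  · have hx : x = 0 := by nlinarith [sq_nonneg x, sq_nonneg y]
    have hy : y = 0 := by nlinarith [sq_nonneg x, sq_nonneg y]
    exact ⟨0, by simp [hx, ← hr0], by simp [hy, ← hr0]⟩
  · set z : ℂ := ⟨x, y⟩ with hz
    have habs : ‖z‖ = r := by
      rw [Complex.norm_def, Complex.normSq_mk]
      rw [show x * x + y * y = r^2 by nlinarith]
      exact Real.sqrt_sq hr
    have hz0 : z ≠ 0 := by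
      intro h0
      rw [h0] at habs; simp at habs; linarith [habs]
    refine ⟨Complex.arg z, ?_, ?_⟩
    · rw [Complex.cos_arg hz0, habs]; field_simp [hz]; rfl
    · rw [Complex.sin_arg, habs]; field_simp [hz]; rfl

lemma euler_exists (a b c : ℝ) :
    ∃ α β γ : ℝ,
      Real.cos β * Real.cos (α + γ) = Real.cos b * Real.cos (a + c) ∧
      Real.sin β * Real.cos (α - γ) = Real.cos b * Real.sin (a + c) ∧
      Real.cos β * Real.sin (α + γ) = Real.sin b * Real.cos (a - c) ∧
      Real.sin β * Real.sin (α - γ) = -(Real.sin b * Real.sin (a - c)) := by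
  open Real in
  obtain ⟨s, hs1, hs2⟩ := circle_exists (cos b * cos (a + c)) (sin b * cos (a - c))
    (Real.sqrt ((cos b * cos (a + c))^2 + (sin b * cos (a - c))^2)) (Real.sqrt_nonneg _)
    (Real.sq_sqrt (by positivity)).symm
  open Real in
  obtain ⟨d, hd1, hd2⟩ := circle_exists (cos b * sin (a + c)) (-(sin b * sin (a - c)))
    (Real.sqrt ((cos b * sin (a + c))^2 + (-(sin b * sin (a - c)))^2)) (Real.sqrt_nonneg _)
    (Real.sq_sqrt (by positivity)).symm
  open Real in
  obtain ⟨β, hβ1, hβ2⟩ := circle_exists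
    (Real.sqrt ((cos b * cos (a + c))^2 + (sin b * cos (a - c))^2))
    (Real.sqrt ((cos b * sin (a + c))^2 + (-(sin b * sin (a - c)))^2)) 1 zero_le_one
    (by
      rw [Real.sq_sqrt (by positivity), Real.sq_sqrt (by positivity)]
      nlinarith [sin_sq_add_cos_sq b, sin_sq_add_cos_sq (a + c), sin_sq_add_cos_sq (a - c)])
  rw [one_mul] at hβ1 hβ2
  refine ⟨(s + d)/2, β, (s - d)/2, ?_, ?_, ?_, ?_⟩
  · rw [show (s+d)/2 + (s-d)/2 = s by ring, hβ1]; exact hs1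
  · rw [show (s+d)/2 - (s-d)/2 = d by ring, hβ2]; exact hd1
  · rw [show (s+d)/2 + (s-d)/2 = s by ring, hβ1]; exact hs2
  · rw [show (s+d)/2 - (s-d)/2 = d by ring, hβ2]; exact hd2

/-- **Turnover property for the 1D Kitaev chain blocks.**
For all real `a, b, c` there exist real `α, β, γ` such that
`exp(−i a X⊗X⊗I) exp(−i b I⊗Y⊗Y) exp(−i c X⊗X⊗I)
  = exp(−i α I⊗Y⊗Y) exp(−i β X⊗X⊗I) exp(−i γ I⊗Y⊗Y)`. -/
theorem kitaev_turnover (a b c : ℝ) :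
    ∃ α β γ : ℝ,
      expm ((-Complex.I * (a : ℂ)) • (PauliX ⊗ₖ PauliX ⊗ₖ I2)) *
      expm ((-Complex.I * (b : ℂ)) • (I2 ⊗ₖ PauliY ⊗ₖ PauliY)) *
      expm ((-Complex.I * (c : ℂ)) • (PauliX ⊗ₖ PauliX ⊗ₖ I2)) =
      expm ((-Complex.I * (α : ℂ)) • (I2 ⊗ₖ PauliY ⊗ₖ PauliY)) *
      expm ((-Complex.I * (β : ℂ)) • (PauliX ⊗ₖ PauliX ⊗ₖ I2)) *
      expm ((-Complex.I * (γ : ℂ)) • (I2 ⊗ₖ PauliY ⊗ₖ PauliY)) := by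
  obtain ⟨α, β, γ, E1, E2, E3, E4⟩ := euler_exists a b c
  rw [Real.cos_add, Real.cos_add] at E1
  rw [Real.cos_sub, Real.sin_add] at E2
  rw [Real.sin_add, Real.cos_sub] at E3
  rw [Real.sin_sub, Real.sin_sub] at E4
  have C1 := congrArg (Complex.ofReal) E1
  have C2 := congrArg (Complex.ofReal) E2
  have C3 := congrArg (Complex.ofReal) E3
  have C4 := congrArg (Complex.ofReal) E4
  push_cast at C1 C2 C3 C4
  refine ⟨α, β, γ, ?_⟩
  have hBA : (I2 ⊗ₖ PauliY ⊗ₖ PauliY : Mat8) * (PauliX ⊗ₖ PauliX ⊗ₖ I2)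
      = -((PauliX ⊗ₖ PauliX ⊗ₖ I2 : Mat8) * (I2 ⊗ₖ PauliY ⊗ₖ PauliY)) := by
    rw [hAB8, neg_neg]
  rw [exp_invol_real _ hA8, exp_invol_real _ hB8, exp_invol_real _ hA8,
    exp_invol_real _ hB8, exp_invol_real _ hA8, exp_invol_real _ hB8,
    expand3 _ _ hA8 hAB8, expand3 _ _ hB8 hBA, hBA]
  match_scalars
  · linear_combination (-1:ℂ) * C1
      + (Complex.cos (b:ℂ) * Complex.sin (a:ℂ) * Complex.sin (c:ℂ)
        - Complex.cos (β:ℂ) * Complex.sin (α:ℂ) * Complex.sin (γ:ℂ)) * Complex.I_sq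
  · linear_combination Complex.I * C2
      - Complex.I * (Complex.sin (β:ℂ) * Complex.sin (α:ℂ) * Complex.sin (γ:ℂ)) * Complex.I_sq
  · linear_combination Complex.I * C3
      + Complex.I * (Complex.sin (b:ℂ) * Complex.sin (a:ℂ) * Complex.sin (c:ℂ)) * Complex.I_sq
  · linear_combination Complex.I^2 * C4

end
end

section
/- For all real numbers a, b, c there exist real numbers α, β, γ such that the following identity of 2×2 complex matrices holds: [[cos a, −i sin a],[−i sin a, cos a]] · [[e^{−ib}, 0],[0, e^{ib}]] · [[cos c, −i sin c],[−i sin c, cos c]] = [[e^{−iα}, 0],[0, e^{iα}]] · [[cos β, −i sin β],[−i sin β, cos β]] · [[e^{−iγ}, 0],[0, e^{iγ}]]. That is, an X–Z–X Euler decomposition in SU(2) can be rewritten as a Z–X–Z Euler decomposition. -/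
open Matrix Complex

/-- **X–Z–X to Z–X–Z Euler decomposition in SU(2).**
For all real `a, b, c` there exist real `α, β, γ` such that
`exp(−i a X) exp(−i b Z) exp(−i c X) = exp(−i α Z) exp(−i β X) exp(−i γ Z)`,
with the exponentials written out as explicit 2×2 matrices. -/
theorem su2_euler_turnover (a b c : ℝ) :
    ∃ α β γ : ℝ,
      (!![Complex.cos a, -Complex.I * Complex.sin a;
          -Complex.I * Complex.sin a, Complex.cos a] *
       !![Complex.exp (-Complex.I * b), 0; 0, Complex.exp (Complex.I * b)] *
       !![Complex.cos c, -Complex.I * Complex.sin c;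
          -Complex.I * Complex.sin c, Complex.cos c]) =
      (!![Complex.exp (-Complex.I * α), 0; 0, Complex.exp (Complex.I * α)] *
       !![Complex.cos β, -Complex.I * Complex.sin β;
          -Complex.I * Complex.sin β, Complex.cos β] *
       !![Complex.exp (-Complex.I * γ), 0; 0, Complex.exp (Complex.I * γ)]) := by
  obtain ⟨x, hxdef⟩ : ∃ x : ℂ, x = Complex.cos a * Complex.cos c * Complex.exp (-(Complex.I * b))
      - Complex.sin a * Complex.sin c * Complex.exp (Complex.I * b) := ⟨_, rfl⟩
  obtain ⟨w, hwdef⟩ : ∃ w : ℂ, w = Complex.cos a * Complex.sin c * Complex.exp (-(Complex.I * b))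
      + Complex.sin a * Complex.cos c * Complex.exp (Complex.I * b) := ⟨_, rfl⟩
  have hxc : (starRingEnd ℂ) x = Complex.cos a * Complex.cos c * Complex.exp (Complex.I * b)
      - Complex.sin a * Complex.sin c * Complex.exp (-(Complex.I * b)) := by
    simp [hxdef, ← Complex.exp_conj, ← Complex.cos_conj, ← Complex.sin_conj,
      Complex.conj_ofReal, Complex.conj_I]
  have hwc : (starRingEnd ℂ) w = Complex.cos a * Complex.sin c * Complex.exp (Complex.I * b)
      + Complex.sin a * Complex.cos c * Complex.exp (-(Complex.I * b)) := by
    simp [hwdef, ← Complex.exp_conj, ← Complex.cos_conj, ← Complex.sin_conj,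
      Complex.conj_ofReal, Complex.conj_I]
  have h1 : Complex.exp (Complex.I * b) * Complex.exp (-(Complex.I * b)) = 1 := by
    rw [← Complex.exp_add]; ring_nf; exact Complex.exp_zero
  have ha : Complex.cos a ^ 2 + Complex.sin a ^ 2 = 1 := Complex.cos_sq_add_sin_sq a
  have hc : Complex.cos c ^ 2 + Complex.sin c ^ 2 = 1 := Complex.cos_sq_add_sin_sq c
  have hC : x * (starRingEnd ℂ) x + w * (starRingEnd ℂ) w = 1 := by
    rw [hxc, hwc, hxdef, hwdef]
    linear_combination ((Complex.cos a ^ 2 + Complex.sin a ^ 2) *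
      (Complex.cos c ^ 2 + Complex.sin c ^ 2)) * h1 +
      (Complex.cos c ^ 2 + Complex.sin c ^ 2) * ha + hc
  have habs : ‖x‖ ^ 2 + ‖w‖ ^ 2 = 1 := by
    rw [Complex.sq_norm, Complex.sq_norm]
    rw [Complex.mul_conj, Complex.mul_conj, ← Complex.ofReal_add] at hC
    exact_mod_cast hC
  have hx0 : 0 ≤ ‖x‖ := norm_nonneg x
  have hw0 : 0 ≤ ‖w‖ := norm_nonneg w
  have hx1 : ‖x‖ ≤ 1 := by nlinarith
  refine ⟨(-(x.arg) - w.arg)/2, Real.arccos (‖x‖), (-(x.arg) + w.arg)/2, ?_⟩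
  set α : ℝ := (-(x.arg) - w.arg)/2 with hα
  set β : ℝ := Real.arccos (‖x‖) with hβ
  set γ : ℝ := (-(x.arg) + w.arg)/2 with hγ
  have hcosβ : Real.cos β = ‖x‖ := Real.cos_arccos (by linarith) hx1
  have hsinβ : Real.sin β = ‖w‖ := by
    rw [hβ, Real.sin_arccos, show (1 : ℝ) - ‖x‖ ^ 2 = ‖w‖ ^ 2 by linarith]
    exact Real.sqrt_sq hw0
  have hcosβC : Complex.cos (β : ℂ) = (‖x‖ : ℂ) := by
    rw [← Complex.ofReal_cos, hcosβ]
  have hsinβC : Complex.sin (β : ℂ) = (‖w‖ : ℂ) := by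
    rw [← Complex.ofReal_sin, hsinβ]
  have hxp : (‖x‖ : ℂ) * Complex.exp (x.arg * Complex.I) = x :=
    Complex.norm_mul_exp_arg_mul_I x
  have hwp : (‖w‖ : ℂ) * Complex.exp (w.arg * Complex.I) = w :=
    Complex.norm_mul_exp_arg_mul_I w
  have hxcp : (‖x‖ : ℂ) * Complex.exp (-((x.arg : ℂ) * Complex.I)) =
      (starRingEnd ℂ) x := by
    have h := congrArg (starRingEnd ℂ) hxp
    rw [_root_.map_mul, Complex.conj_ofReal, ← Complex.exp_conj, _root_.map_mul,
      Complex.conj_ofReal, Complex.conj_I, mul_neg] at h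
    exact h
  have hwcp : (‖w‖ : ℂ) * Complex.exp (-((w.arg : ℂ) * Complex.I)) =
      (starRingEnd ℂ) w := by
    have h := congrArg (starRingEnd ℂ) hwp
    rw [_root_.map_mul, Complex.conj_ofReal, ← Complex.exp_conj, _root_.map_mul,
      Complex.conj_ofReal, Complex.conj_I, mul_neg] at h
    exact h
  have hE1 : Complex.exp (-(Complex.I * (α : ℂ))) * Complex.exp (-(Complex.I * (γ : ℂ)))
      = Complex.exp ((x.arg : ℂ) * Complex.I) := by
    rw [← Complex.exp_add]; congr 1; rw [hα, hγ]; push_cast; ring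
  have hE2 : Complex.exp (-(Complex.I * (α : ℂ))) * Complex.exp (Complex.I * (γ : ℂ))
      = Complex.exp ((w.arg : ℂ) * Complex.I) := by
    rw [← Complex.exp_add]; congr 1; rw [hα, hγ]; push_cast; ring
  have hE3 : Complex.exp (Complex.I * (α : ℂ)) * Complex.exp (-(Complex.I * (γ : ℂ)))
      = Complex.exp (-((w.arg : ℂ) * Complex.I)) := by
    rw [← Complex.exp_add]; congr 1; rw [hα, hγ]; push_cast; ring
  have hE4 : Complex.exp (Complex.I * (α : ℂ)) * Complex.exp (Complex.I * (γ : ℂ))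
      = Complex.exp (-((x.arg : ℂ) * Complex.I)) := by
    rw [← Complex.exp_add]; congr 1; rw [hα, hγ]; push_cast; ring
  ext i j
  fin_cases i <;> fin_cases j <;>
    simp only [] <;>
    simp [Matrix.mul_apply, Fin.sum_univ_two, -Complex.ofReal_cos, -Complex.ofReal_sin]
  · linear_combination (-1 : ℂ) * hxdef - hxp -
      Complex.exp ((x.arg : ℂ) * Complex.I) * hcosβC - Complex.cos (β : ℂ) * hE1 +
      (Complex.sin ↑a * Complex.exp (Complex.I * ↑b) * Complex.sin ↑c) * Complex.I_sq
  · linear_combination (Complex.I * Complex.sin (β : ℂ)) * hE2 +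
      (Complex.I * Complex.exp ((w.arg : ℂ) * Complex.I)) * hsinβC +
      Complex.I * hwp + Complex.I * hwdef
  · linear_combination (Complex.I * Complex.sin (β : ℂ)) * hE3 +
      (Complex.I * Complex.exp (-((w.arg : ℂ) * Complex.I))) * hsinβC +
      Complex.I * hwcp + Complex.I * hwc
  · linear_combination (-1 : ℂ) * hxc - hxcp -
      Complex.exp (-((x.arg : ℂ) * Complex.I)) * hcosβC - Complex.cos (β : ℂ) * hE4 +
      (Complex.sin ↑a * Complex.exp (-(Complex.I * ↑b)) * Complex.sin ↑c) * Complex.I_sq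
end

section
/- In the space of 4×4 complex matrices define Q⁺ := (X ⊗ X + Y ⊗ Y)/2, Q⁻ := (X ⊗ X − Y ⊗ Y)/2, R⁺ := (Z ⊗ I + I ⊗ Z)/2, R⁻ := (Z ⊗ I − I ⊗ Z)/2, P⁺ := (X ⊗ Y + Y ⊗ X)/2, and P⁻ := (X ⊗ Y − Y ⊗ X)/2. Then every element of {Q⁻, R⁺, P⁺} commutes with every element of {Q⁺, R⁻, P⁻}; that is, all nine commutators [Q⁻, Q⁺], [Q⁻, R⁻], [Q⁻, P⁻], [R⁺, Q⁺], [R⁺, R⁻], [R⁺, P⁻], [P⁺, Q⁺], [P⁺, R⁻], [P⁺, P⁻] vanish, so the Hamiltonian algebra of the two-site TFXY model splits into two mutually commuting su(2) subalgebras. -/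
open Matrix
open scoped Kronecker

/-- The Pauli matrix `Z`. -/
def PauliZ : Matrix (Fin 2) (Fin 2) ℂ := !![1, 0; 0, -1]

set_option maxHeartbeats 4000000 in
/-- **The two-site TFXY Hamiltonian algebra splits into two commuting su(2)'s.**
With `Q± = (X⊗X ± Y⊗Y)/2`, `R± = (Z⊗I ± I⊗Z)/2`, `P± = (X⊗Y ± Y⊗X)/2`,
every element of `{Q⁻, R⁺, P⁺}` commutes with every element of `{Q⁺, R⁻, P⁻}`. -/
theorem tfxy_two_commuting_su2 :
    let Qp := ((2 : ℂ)⁻¹) • (PauliX ⊗ₖ PauliX + PauliY ⊗ₖ PauliY)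
    let Qm := ((2 : ℂ)⁻¹) • (PauliX ⊗ₖ PauliX - PauliY ⊗ₖ PauliY)
    let Rp := ((2 : ℂ)⁻¹) • (PauliZ ⊗ₖ I2 + I2 ⊗ₖ PauliZ)
    let Rm := ((2 : ℂ)⁻¹) • (PauliZ ⊗ₖ I2 - I2 ⊗ₖ PauliZ)
    let Pp := ((2 : ℂ)⁻¹) • (PauliX ⊗ₖ PauliY + PauliY ⊗ₖ PauliX)
    let Pm := ((2 : ℂ)⁻¹) • (PauliX ⊗ₖ PauliY - PauliY ⊗ₖ PauliX)
    Qm * Qp - Qp * Qm = 0 ∧ Qm * Rm - Rm * Qm = 0 ∧ Qm * Pm - Pm * Qm = 0 ∧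
    Rp * Qp - Qp * Rp = 0 ∧ Rp * Rm - Rm * Rp = 0 ∧ Rp * Pm - Pm * Rp = 0 ∧
    Pp * Qp - Qp * Pp = 0 ∧ Pp * Rm - Rm * Pp = 0 ∧ Pp * Pm - Pm * Pp = 0 := by
  refine ⟨?_, ?_, ?_, ?_, ?_, ?_, ?_, ?_, ?_⟩ <;>
  · ext ⟨i, j⟩ ⟨k, l⟩
    fin_cases i <;> fin_cases j <;> fin_cases k <;> fin_cases l <;>
      simp [PauliX, PauliY, PauliZ, I2, Matrix.mul_apply, Fintype.sum_prod_type,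
        Fin.sum_univ_succ, Matrix.kroneckerMap_apply, Matrix.one_apply]
end
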